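/- arXiv:1307.0068 — 5 statements merged into one kernel-verified Lean document; each statement's English description precedes it below -/
import Mathlib

section
/- Let F : N → C, G : N → D and K : C → D be functors and δ : K∘F ⇒ G a natural transformation exhibiting K as the Kan extension of G along F. If L : M → N is a functor admitting a fully faithful right adjoint, then the whiskered natural transformation δ_L : K∘F∘L ⇒ G∘L exhibits K as the Kan extension of G∘L along F∘L. -/
open CategoryTheory

universe v₁ v₂ v₃ v₄ u₁ u₂ u₃ u₄

/-- Lemma 7.1.
Let `F : N ⥤ C`, `G : N ⥤ D` and `K : C ⥤ D` be functors and `δ : K ∘ F ⟶ G` a natural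
transformation exhibiting `K` as the Kan extension of `G` along `F` (in the pointwise
sense used in the paper: for every functor `F' : C ⥤ D` and every natural transformation
`γ : F' ∘ F ⟶ G` there is a unique `α : F' ⟶ K` with `δ_N ∘ α_{F(N)} = γ_N` for all `N`).
If `L : M ⥤ N` admits a fully faithful right adjoint, then the whiskered natural
transformation `δ_L : K ∘ F ∘ L ⟶ G ∘ L` exhibits `K` as the Kan extension of `G ∘ L`
along `F ∘ L`. -/
theorem kanExtension_whisker_of_fullyFaithful_rightAdjoint
    {N : Type u₁} [Category.{v₁} N] {C : Type u₂} [Category.{v₂} C]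
    {D : Type u₃} [Category.{v₃} D] {M : Type u₄} [Category.{v₄} M]
    (F : N ⥤ C) (G : N ⥤ D) (K : C ⥤ D) (δ : F ⋙ K ⟶ G)
    (hKan : ∀ (F' : C ⥤ D) (γ : F ⋙ F' ⟶ G),
      ∃! α : F' ⟶ K, ∀ n : N, α.app (F.obj n) ≫ δ.app n = γ.app n)
    (L : M ⥤ N) (R : N ⥤ M) (adj : L ⊣ R) [R.Full] [R.Faithful]
    (F' : C ⥤ D) (γ : (L ⋙ F) ⋙ F' ⟶ L ⋙ G) :
    ∃! α : F' ⟶ K, ∀ m : M,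
      α.app ((L ⋙ F).obj m) ≫ (Functor.whiskerLeft L δ).app m = γ.app m := by
  haveI : IsIso adj.counit := adj.counit_isIso_of_R_fully_faithful
  -- transport γ along the counit isomorphism to a transformation `F ⋙ F' ⟶ G`
  let γ' : F ⋙ F' ⟶ G :=
    { app := fun n =>
        F'.map (F.map (inv (adj.counit.app n))) ≫ γ.app (R.obj n) ≫ G.map (adj.counit.app n)
      naturality := by
        intro n n' f
        have hγ := γ.naturality (R.map f)
        simp only [Functor.comp_obj, Functor.comp_map] at hγ ⊢
        have hc : adj.counit.app n ≫ f = L.map (R.map f) ≫ adj.counit.app n' :=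
          (adj.counit.naturality f).symm
        have h1 : F.map f ≫ F.map (inv (adj.counit.app n')) =
            F.map (inv (adj.counit.app n)) ≫ F.map (L.map (R.map f)) := by
          rw [← F.map_comp, ← F.map_comp]
          congr 1
          rw [IsIso.comp_inv_eq, Category.assoc, ← hc, IsIso.inv_hom_id_assoc]
        rw [← Category.assoc (F'.map (F.map f)), ← F'.map_comp, h1, F'.map_comp,
          Category.assoc, ← Category.assoc (F'.map (F.map (L.map (R.map f)))), hγ]
        simp only [Category.assoc, ← G.map_comp, ← hc] }
  obtain ⟨α, hα, huniq⟩ := hKan F' γ'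
  refine ⟨α, ?_, ?_⟩
  · intro m
    have h := hα (L.obj m)
    have htri : L.map (adj.unit.app m) ≫ adj.counit.app (L.obj m) = 𝟙 (L.obj m) :=
      adj.left_triangle_components m
    have hinv : inv (adj.counit.app (L.obj m)) = L.map (adj.unit.app m) :=
      IsIso.inv_eq_of_inv_hom_id htri
    have hγnat := γ.naturality (adj.unit.app m)
    simp only [Functor.comp_obj, Functor.comp_map, Functor.id_obj, Functor.id_map] at hγnat
    simp only [Functor.whiskerLeft_app, Functor.comp_obj]
    rw [h]
    simp only [γ', hinv]
    rw [← Category.assoc, hγnat, Category.assoc, ← G.map_comp, htri]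
    simp
  · intro β hβ
    refine huniq β ?_
    intro n
    have h := hβ (R.obj n)
    simp only [Functor.whiskerLeft_app, Functor.comp_obj] at h
    have hαnat := β.naturality (F.map (adj.counit.app n))
    have hδnat := δ.naturality (adj.counit.app n)
    simp only [Functor.comp_obj, Functor.comp_map, Functor.id_obj] at hαnat hδnat
    have hαnat' : β.app (F.obj n) =
        inv (F'.map (F.map (adj.counit.app n))) ≫ β.app (F.obj (L.obj (R.obj n))) ≫
          K.map (F.map (adj.counit.app n)) := by
      rw [← hαnat]; simp
    simp only [γ']
    calc β.app (F.obj n) ≫ δ.app n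
        = inv (F'.map (F.map (adj.counit.app n))) ≫ β.app (F.obj (L.obj (R.obj n))) ≫
            K.map (F.map (adj.counit.app n)) ≫ δ.app n := by
          rw [hαnat']; simp [Category.assoc]
      _ = inv (F'.map (F.map (adj.counit.app n))) ≫ β.app (F.obj (L.obj (R.obj n))) ≫
            δ.app (L.obj (R.obj n)) ≫ G.map (adj.counit.app n) := by
          rw [hδnat]
      _ = F'.map (F.map (inv (adj.counit.app n))) ≫ γ.app (R.obj n) ≫
            G.map (adj.counit.app n) := by
          rw [← Category.assoc (β.app _), h]
          congr 1
          simp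
end

section
/- Let F : N → C and G : N → D be functors such that: (i) for all morphisms f and g of N, F(f) = F(g) implies G(f) = G(g); and (ii) for every object C of C there exists an object U of N with F(U) = C such that for every object N of N the map Hom_N(U, N) → Hom_C(C, F(N)) given by the action of F is surjective. Then there exist a functor K : C → D and a natural transformation κ : K∘F ⇒ G exhibiting K as the Kan extension of G along F; moreover K may be chosen so that K(C) = G(U) for a choice of U as in (ii). -/
open CategoryTheory

universe v₁ v₂ v₃ u₁ u₂ u₃

namespace KanAuxWeaklyUniversal

variable {N : Type u₁} [Category.{v₁} N] {C : Type u₂} [Category.{v₂} C]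
    {D : Type u₃} [Category.{v₃} D]
    (F : N ⥤ C) (G : N ⥤ D)

variable (h2 : ∀ c : C, ∃ (U : N) (hU : F.obj U = c),
      ∀ (m : N) (φ : c ⟶ F.obj m), ∃ h : U ⟶ m, F.map h = eqToHom hU ≫ φ)

noncomputable def U (c : C) : N := (h2 c).choose

lemma hU (c : C) : F.obj (U F h2 c) = c := (h2 c).choose_spec.choose

noncomputable def lift {c : C} (m : N) (φ : c ⟶ F.obj m) : U F h2 c ⟶ m :=
  ((h2 c).choose_spec.choose_spec m φ).choose

lemma F_lift {c : C} (m : N) (φ : c ⟶ F.obj m) :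
    F.map (lift F h2 m φ) = eqToHom (hU F h2 c) ≫ φ :=
  ((h2 c).choose_spec.choose_spec m φ).choose_spec

noncomputable def L {c c' : C} (φ : c ⟶ c') : U F h2 c ⟶ U F h2 c' :=
  lift F h2 _ (φ ≫ eqToHom (hU F h2 c').symm)

lemma F_L {c c' : C} (φ : c ⟶ c') :
    F.map (L F h2 φ) = eqToHom (hU F h2 c) ≫ φ ≫ eqToHom (hU F h2 c').symm :=
  F_lift F h2 _ _

noncomputable def u (n : N) : U F h2 (F.obj n) ⟶ n :=
  lift F h2 n (𝟙 (F.obj n))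

lemma F_u (n : N) : F.map (u F h2 n) = eqToHom (hU F h2 (F.obj n)) := by
  simpa [u] using F_lift F h2 n (𝟙 (F.obj n))

variable (h1 : ∀ {X Y : N} (f g : X ⟶ Y), F.map f = F.map g → G.map f = G.map g)

noncomputable def K : C ⥤ D where
  obj c := G.obj (U F h2 c)
  map φ := G.map (L F h2 φ)
  map_id c := by
    rw [← G.map_id]
    exact h1 _ _ (by simp [F_L])
  map_comp f g := by
    rw [← G.map_comp]
    exact h1 _ _ (by simp [F_L])

noncomputable def κ : F ⋙ K F G h2 h1 ⟶ G where
  app n := G.map (u F h2 n)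
  naturality n m f := by
    show G.map (L F h2 (F.map f)) ≫ G.map (u F h2 m) = G.map (u F h2 n) ≫ G.map f
    rw [← G.map_comp, ← G.map_comp]
    exact h1 _ _ (by simp [F_L, F_u])

noncomputable def α (F' : C ⥤ D) (γ : F ⋙ F' ⟶ G) : F' ⟶ K F G h2 h1 where
  app c := eqToHom (congrArg F'.obj (hU F h2 c).symm) ≫ γ.app (U F h2 c)
  naturality c c' φ := by
    show F'.map φ ≫ eqToHom _ ≫ γ.app _ =
      (eqToHom _ ≫ γ.app _) ≫ G.map (L F h2 φ)
    have := γ.naturality (L F h2 φ)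
    simp only [Functor.comp_map] at this
    rw [Category.assoc, ← this, F_L]
    simp [eqToHom_map]

lemma α_triangle (F' : C ⥤ D) (γ : F ⋙ F' ⟶ G) (n : N) :
    (α F G h2 h1 F' γ).app (F.obj n) ≫ (κ F G h2 h1).app n = γ.app n := by
  show (eqToHom _ ≫ γ.app _) ≫ G.map (u F h2 n) = γ.app n
  have := γ.naturality (u F h2 n)
  simp only [Functor.comp_map] at this
  rw [Category.assoc, ← this, F_u]
  simp [eqToHom_map]

end KanAuxWeaklyUniversal

open KanAuxWeaklyUniversal in
/-- Remark after Theorem 5.1. -/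
theorem kanExtension_of_weakly_universal_objects
    {N : Type u₁} [Category.{v₁} N] {C : Type u₂} [Category.{v₂} C]
    {D : Type u₃} [Category.{v₃} D]
    (F : N ⥤ C) (G : N ⥤ D)
    (h1 : ∀ {X Y : N} (f g : X ⟶ Y), F.map f = F.map g → G.map f = G.map g)
    (h2 : ∀ c : C, ∃ (U : N) (hU : F.obj U = c),
      ∀ (m : N) (φ : c ⟶ F.obj m), ∃ h : U ⟶ m, F.map h = eqToHom hU ≫ φ) :
    ∃ (K : C ⥤ D) (κ : F ⋙ K ⟶ G),
      (∀ (F' : C ⥤ D) (γ : F ⋙ F' ⟶ G),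
        ∃! α : F' ⟶ K, ∀ n : N, α.app (F.obj n) ≫ κ.app n = γ.app n) ∧
      ∀ c : C, ∃ (U : N) (hU : F.obj U = c),
        (∀ (m : N) (φ : c ⟶ F.obj m), ∃ h : U ⟶ m, F.map h = eqToHom hU ≫ φ) ∧
        K.obj c = G.obj U := by
  refine ⟨K F G h2 h1, κ F G h2 h1, ?_, ?_⟩
  · intro F' γ
    refine ⟨α F G h2 h1 F' γ, α_triangle F G h2 h1 F' γ, ?_⟩
    intro β hβ
    ext c
    -- naturality of β along eqToHom (hU c)
    have hnat := β.naturality (eqToHom (hU F h2 c))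
    have hKe : (K F G h2 h1).map (eqToHom (hU F h2 c)) =
        (κ F G h2 h1).app (U F h2 c) := by
      show G.map (L F h2 (eqToHom (hU F h2 c))) = G.map (u F h2 (U F h2 c))
      exact h1 _ _ (by simp [F_L, F_u])
    have htri := hβ (U F h2 c)
    have : β.app c = eqToHom (congrArg F'.obj (hU F h2 c).symm) ≫
        β.app (F.obj (U F h2 c)) ≫ (K F G h2 h1).map (eqToHom (hU F h2 c)) := by
      rw [← hnat]
      simp [eqToHom_map]
    rw [this, hKe]
    erw [htri]
    rfl
  · intro c
    exact ⟨U F h2 c, hU F h2 c, fun m φ => ⟨lift F h2 m φ, F_lift F h2 m φ⟩, rfl⟩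
end

section
/- If Γ is an admissible Galois structure in which monadic extensions are pullback-stable (the pullback of a monadic extension along any morphism exists and is a monadic extension), then normal extensions and coverings are pullback-stable: the pullback of a normal extension (respectively, of a covering) along any morphism of C is again a normal extension (respectively, a covering). -/
open CategoryTheory CategoryTheory.Limits

universe v₁ v₂ u₁ u₂

namespace GaloisPaper

/-- A Galois structure `Γ = (C, X, H, I, η, ε, E, F)`. -/
structure GaloisStructure (C : Type u₁) [Category.{v₁} C] (X : Type u₂) [Category.{v₂} X] where
  I : C ⥤ X
  H : X ⥤ C
  adj : I ⊣ H
  fib : MorphismProperty C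
  fibX : MorphismProperty X
  fib_of_iso : ∀ {A B : C} (f : A ⟶ B), IsIso f → fib f
  fibX_of_iso : ∀ {A B : X} (f : A ⟶ B), IsIso f → fibX f
  fib_pullback : ∀ {A B Z : C} (f : A ⟶ B) (g : Z ⟶ B), fib f →
    ∃ (P : C) (p₁ : P ⟶ A) (p₂ : P ⟶ Z), IsPullback p₁ p₂ f g ∧ fib p₂
  fibX_pullback : ∀ {A B Z : X} (f : A ⟶ B) (g : Z ⟶ B), fibX f →
    ∃ (P : X) (p₁ : P ⟶ A) (p₂ : P ⟶ Z), IsPullback p₁ p₂ f g ∧ fibX p₂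
  fib_comp : ∀ {A B Z : C} (f : A ⟶ B) (g : B ⟶ Z), fib f → fib g → fib (f ≫ g)
  fibX_comp : ∀ {A B Z : X} (f : A ⟶ B) (g : B ⟶ Z), fibX f → fibX g → fibX (f ≫ g)
  H_fib : ∀ {A B : X} (f : A ⟶ B), fibX f → fib (H.map f)
  I_fib : ∀ {A B : C} (f : A ⟶ B), fib f → fibX (I.map f)

namespace GaloisStructure

variable {C : Type u₁} [Category.{v₁} C] {X : Type u₂} [Category.{v₂} X]
variable (Γ : GaloisStructure C X)

/-- A trivial covering: a fibration whose `η`-naturality square is a pullback. -/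
def TrivialCovering {A B : C} (f : A ⟶ B) : Prop :=
  Γ.fib f ∧ IsPullback (Γ.adj.unit.app A) f ((Γ.I ⋙ Γ.H).map f) (Γ.adj.unit.app B)

/-- The full subcategory `(E ↓ B)` of the slice category over `B` given by fibrations. -/
abbrev SliceFib (B : C) := ObjectProperty.FullSubcategory (fun f : Over B => Γ.fib f.hom)

/-- The full subcategory `(F ↓ Y)` of the slice category over `Y : X` given by
morphisms of the class `F`. -/
abbrev SliceFibX (Y : X) := ObjectProperty.FullSubcategory (fun f : Over Y => Γ.fibX f.hom)

/-- Composition with a fibration `p : E ⟶ B`, as a functor `(E ↓ E) ⥤ (E ↓ B)`;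
the pullback functor `p*` is its right adjoint. -/
def compAlong {E B : C} (p : E ⟶ B) (hp : Γ.fib p) : Γ.SliceFib E ⥤ Γ.SliceFib B :=
  ObjectProperty.lift _ (ObjectProperty.ι _ ⋙ Over.map p)
    (fun f => Γ.fib_comp _ _ f.property hp)

/-- A monadic extension: a fibration `p` whose pullback functor
`p* : (E ↓ B) ⥤ (E ↓ E)` (i.e. the right adjoint of composition with `p`) is monadic. -/
def MonadicExtension {E B : C} (p : E ⟶ B) : Prop :=
  ∃ hp : Γ.fib p, ∃ pstar : Γ.SliceFib B ⥤ Γ.SliceFib E,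
    Nonempty (Γ.compAlong p hp ⊣ pstar) ∧ Nonempty (MonadicRightAdjoint pstar)

/-- A covering (central extension): a fibration whose pullback along some monadic
extension is a trivial covering. -/
def Covering {A B : C} (f : A ⟶ B) : Prop :=
  Γ.fib f ∧ ∃ (E : C) (p : E ⟶ B), Γ.MonadicExtension p ∧
    ∃ (P : C) (q : P ⟶ A) (r : P ⟶ E), IsPullback q r f p ∧ Γ.TrivialCovering r

/-- A normal extension: a monadic extension whose kernel pair projections are
trivial coverings. -/
def NormalExtension {E B : C} (p : E ⟶ B) : Prop :=
  Γ.MonadicExtension p ∧ ∃ (R : C) (d c : R ⟶ E), IsPullback d c p p ∧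
    Γ.TrivialCovering d ∧ Γ.TrivialCovering c

/-- The restriction `I^B : (E ↓ B) ⥤ (F ↓ I B)` of the reflection `I`. -/
def restrictI (B : C) : Γ.SliceFib B ⥤ Γ.SliceFibX (Γ.I.obj B) :=
  ObjectProperty.lift _ (ObjectProperty.ι _ ⋙ Over.post Γ.I)
    (fun f => Γ.I_fib _ f.property)

/-- Admissibility of a Galois structure: each `H^B`, i.e. each right adjoint of
`I^B : (E ↓ B) ⥤ (F ↓ I B)`, is full and faithful. -/
def Admissible : Prop :=
  ∀ B : C, ∃ (HB : Γ.SliceFibX (Γ.I.obj B) ⥤ Γ.SliceFib B) (_ : Γ.restrictI B ⊣ HB),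
    HB.Full ∧ HB.Faithful

/-- Pullback-stability of monadic extensions: the pullback of a monadic extension
along any morphism exists and is again a monadic extension. -/
def MonStable : Prop :=
  ∀ {E B Z : C} (p : E ⟶ B) (g : Z ⟶ B), Γ.MonadicExtension p →
    ∃ (P : C) (q : P ⟶ E) (r : P ⟶ Z), IsPullback q r p g ∧ Γ.MonadicExtension r

/-- A weakly universal normal extension of `B`. -/
def WeaklyUniversal {U B : C} (u : U ⟶ B) : Prop :=
  Γ.NormalExtension u ∧ ∀ {E : C} (p : E ⟶ B), Γ.NormalExtension p → ∃ e : U ⟶ E, e ≫ p = u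

/-- The category `NExt_Γ(C)` of normal extensions, a full subcategory of the arrow
category of `C`. -/
abbrev NExtCat := ObjectProperty.FullSubcategory (fun f : Arrow C => Γ.NormalExtension f.hom)

/-- The category `Ext_Γ(C)` of monadic extensions, a full subcategory of the arrow
category of `C`. -/
abbrev ExtCat := ObjectProperty.FullSubcategory (fun f : Arrow C => Γ.MonadicExtension f.hom)

/-- The codomain functor `NExt_Γ(C) ⥤ C`. -/
def codF : Γ.NExtCat ⥤ C := ObjectProperty.ι _ ⋙ Arrow.rightFunc

/-- The codomain functor `Ext_Γ(C) ⥤ C`. -/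
def codExt : Γ.ExtCat ⥤ C := ObjectProperty.ι _ ⋙ Arrow.rightFunc

/-- The inclusion `NExt_Γ(C) ⥤ Ext_Γ(C)`: every normal extension is monadic. -/
def inclNExt : Γ.NExtCat ⥤ Γ.ExtCat :=
  ObjectProperty.lift _ (ObjectProperty.ι _) (fun p => p.property.1)

end GaloisStructure

end GaloisPaper

namespace GaloisPaper
namespace GaloisStructure

variable {C : Type u₁} [Category.{v₁} C] {X : Type u₂} [Category.{v₂} X]

/-! ### Auxiliary general category-theoretic lemmas -/

section AuxGeneral

universe w₁ w₂ x₁ x₂ x₃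

/-- Split coequalizers transport along isomorphisms of parallel pairs. -/
theorem hasSplitCoequalizer_of_iso {C : Type x₁} [Category.{w₁} C] {A₀ B₀ A₁ B₁ : C}
    (i : A₀ ≅ A₁) (j : B₀ ≅ B₁) {f g : A₀ ⟶ B₀} {f' g' : A₁ ⟶ B₁}
    (hf : i.hom ≫ f' = f ≫ j.hom) (hg : i.hom ≫ g' = g ≫ j.hom)
    [HasSplitCoequalizer f g] : HasSplitCoequalizer f' g' := by
  obtain ⟨Z, π, ⟨sp⟩⟩ := HasSplitCoequalizer.splittable (f := f) (g := g)
  have hf' : f' ≫ j.inv = i.inv ≫ f := by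
    rw [← cancel_epi i.hom, ← Category.assoc, hf, Category.assoc, Iso.hom_inv_id,
      Category.comp_id, ← Category.assoc, Iso.hom_inv_id, Category.id_comp]
  have hg' : g' ≫ j.inv = i.inv ≫ g := by
    rw [← cancel_epi i.hom, ← Category.assoc, hg, Category.assoc, Iso.hom_inv_id,
      Category.comp_id, ← Category.assoc, Iso.hom_inv_id, Category.id_comp]
  refine ⟨⟨Z, j.inv ≫ π, ⟨{
    rightSection := sp.rightSection ≫ j.hom
    leftSection := j.inv ≫ sp.leftSection ≫ i.hom
    condition := by
      simp only [← Category.assoc]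
      rw [hf', hg']
      simp only [Category.assoc, sp.condition]
    rightSection_π := by simp
    leftSection_bottom := by simp [hg]
    leftSection_top := by simp [hf] }⟩⟩⟩

/-- A monadic right adjoint composed with an equivalence is again a monadic right adjoint. -/
noncomputable def monadicRightAdjointCompEquivalence
    {D : Type x₁} {C : Type x₂} {C' : Type x₃} [Category.{w₁} D] [Category.{w₁} C]
    [Category.{w₁} C'] (R : D ⥤ C) [MonadicRightAdjoint R] (e : C ≌ C') :
    MonadicRightAdjoint (R ⋙ e.functor) := by
  have adj₂ : (e.inverse ⋙ monadicLeftAdjoint R) ⊣ (R ⋙ e.functor) :=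
    e.symm.toAdjunction.comp (monadicAdjunction R)
  have key : ∀ {A B : D} (f g : A ⟶ B), (R ⋙ e.functor).IsSplitPair f g →
      R.IsSplitPair f g := by
    intro A B f g hsp
    haveI : HasSplitCoequalizer (e.functor.map (R.map f)) (e.functor.map (R.map g)) := hsp
    haveI : HasSplitCoequalizer (e.inverse.map (e.functor.map (R.map f)))
        (e.inverse.map (e.functor.map (R.map g))) := inferInstance
    have nf : (e.unitIso.app (R.obj A)).symm.hom ≫ R.map f
        = e.inverse.map (e.functor.map (R.map f)) ≫ (e.unitIso.app (R.obj B)).symm.hom := by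
      have h := e.unitIso.inv.naturality (R.map f)
      simp only [Functor.comp_obj, Functor.id_obj, Functor.comp_map, Functor.id_map] at h
      exact h.symm
    have ng : (e.unitIso.app (R.obj A)).symm.hom ≫ R.map g
        = e.inverse.map (e.functor.map (R.map g)) ≫ (e.unitIso.app (R.obj B)).symm.hom := by
      have h := e.unitIso.inv.naturality (R.map g)
      simp only [Functor.comp_obj, Functor.id_obj, Functor.comp_map, Functor.id_map] at h
      exact h.symm
    exact hasSplitCoequalizer_of_iso (e.unitIso.app (R.obj A)).symm
      (e.unitIso.app (R.obj B)).symm nf ng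
  haveI h₁ : Monad.HasCoequalizerOfIsSplitPair (R ⋙ e.functor) := by
    constructor
    intro A B f g hsp
    haveI := key f g hsp
    haveI : CreatesColimit (parallelPair f g) R :=
      Monad.createsGSplitCoequalizersOfMonadic R f g
    haveI : HasColimit (parallelPair f g ⋙ R) := by
      apply @hasColimit_of_iso _ _ _ _ _ _ ?_ (diagramIsoParallelPair _)
      exact inferInstanceAs <| HasCoequalizer (R.map f) (R.map g)
    exact hasColimit_of_created (parallelPair f g) R
  haveI h₂ : Monad.PreservesColimitOfIsSplitPair (R ⋙ e.functor) := by
    constructor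
    intro A B f g hsp
    haveI := key f g hsp
    haveI : CreatesColimit (parallelPair f g) R :=
      Monad.createsGSplitCoequalizersOfMonadic R f g
    haveI : HasColimit (parallelPair f g ⋙ R) := by
      apply @hasColimit_of_iso _ _ _ _ _ _ ?_ (diagramIsoParallelPair _)
      exact inferInstanceAs <| HasCoequalizer (R.map f) (R.map g)
    haveI : PreservesColimit (parallelPair f g) R := inferInstance
    exact inferInstance
  haveI h₃ : Monad.ReflectsColimitOfIsSplitPair (R ⋙ e.functor) := by
    constructor
    intro A B f g hsp
    haveI := key f g hsp
    haveI : CreatesColimit (parallelPair f g) R :=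
      Monad.createsGSplitCoequalizersOfMonadic R f g
    exact inferInstance
  exact Monad.monadicOfHasPreservesReflectsGSplitCoequalizers adj₂

/-- If `L ⊣ R` with `R` fully faithful, and `φ : L.obj w ⟶ x` is such that postcomposition
with `φ` (after applying `L`) gives a bijection on hom-sets, then `φ` is an isomorphism. -/
theorem isIso_of_postcomp_bijective {C : Type x₁} {D : Type x₂} [Category.{w₁} C]
    [Category.{w₂} D] {L : C ⥤ D} {R : D ⥤ C} (adj : L ⊣ R) [R.Full] [R.Faithful]
    {w : C} {x : D} (φ : L.obj w ⟶ x)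
    (hbij : ∀ T : C, Function.Bijective (fun h : T ⟶ w => L.map h ≫ φ)) : IsIso φ := by
  have hbij' : ∀ T : C, Function.Bijective (fun h : T ⟶ w => h ≫ adj.homEquiv w x φ) := by
    intro T
    have he : (fun h : T ⟶ w => h ≫ adj.homEquiv w x φ)
        = (adj.homEquiv T x) ∘ (fun h : T ⟶ w => L.map h ≫ φ) := by
      funext h
      exact (adj.homEquiv_naturality_left h φ).symm
    rw [he]
    exact (adj.homEquiv T x).bijective.comp (hbij T)
  obtain ⟨ρ, hρ⟩ := (hbij' (R.obj x)).2 (𝟙 (R.obj x))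
  have hρ' : ρ ≫ adj.homEquiv w x φ = 𝟙 (R.obj x) := hρ
  have hlr : adj.homEquiv w x φ ≫ ρ = 𝟙 w := by
    apply (hbij' w).1
    show (adj.homEquiv w x φ ≫ ρ) ≫ adj.homEquiv w x φ = 𝟙 w ≫ adj.homEquiv w x φ
    rw [Category.assoc, hρ', Category.comp_id, Category.id_comp]
  haveI : IsIso ((adj.homEquiv w x) φ) := ⟨ρ, hlr, hρ'⟩
  have hφ : φ = L.map (adj.homEquiv w x φ) ≫ adj.counit.app x := by
    conv_lhs => rw [← (adj.homEquiv w x).symm_apply_apply φ]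
    rw [adj.homEquiv_counit]
  rw [hφ]
  infer_instance

/-- Extensionality for morphisms of full subcategories of over categories. -/
theorem sliceHomExt {C : Type x₁} [Category.{w₁} C] {B : C} {Q : Over B → Prop}
    {T₁ T₂ : ObjectProperty.FullSubcategory Q} {u v : T₁ ⟶ T₂}
    (h : CommaMorphism.left u.hom = CommaMorphism.left v.hom) : u = v :=
  InducedCategory.hom_ext (Over.OverMorphism.ext h)

/-- An isomorphism in a full subcategory of an over category, from an isomorphism of the
underlying objects. -/
def sliceIsoMk {C : Type x₁} [Category.{w₁} C] {B : C} {Q : Over B → Prop}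
    {T₁ T₂ : ObjectProperty.FullSubcategory Q} (f : T₁.obj ≅ T₂.obj) : T₁ ≅ T₂ where
  hom := ObjectProperty.homMk f.hom
  inv := ObjectProperty.homMk f.inv
  hom_inv_id := InducedCategory.hom_ext f.hom_inv_id
  inv_hom_id := InducedCategory.hom_ext f.inv_hom_id

@[simp] theorem sliceIsoMk_hom {C : Type x₁} [Category.{w₁} C] {B : C} {Q : Over B → Prop}
    {T₁ T₂ : ObjectProperty.FullSubcategory Q} (f : T₁.obj ≅ T₂.obj) :
    CommaMorphism.left (X := T₁.obj) (Y := T₂.obj) (sliceIsoMk f).hom.hom = f.hom.left := rfl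

@[simp] theorem slice_comp_left {C : Type x₁} [Category.{w₁} C] {B : C} {Q : Over B → Prop}
    {T₁ T₂ T₃ : ObjectProperty.FullSubcategory Q} (u : T₁ ⟶ T₂) (v : T₂ ⟶ T₃) :
    CommaMorphism.left (X := T₁.obj) (Y := T₃.obj) (u ≫ v).hom
      = CommaMorphism.left u.hom ≫ CommaMorphism.left v.hom := rfl

end AuxGeneral

/-! ### Auxiliary lemmas about Galois structures -/


@[simp] theorem compAlong_obj_obj (Γ : GaloisStructure C X) {E B : C} (p : E ⟶ B)
    (hp : Γ.fib p) (T : Γ.SliceFib E) :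
    ((Γ.compAlong p hp).obj T).obj = (Over.map p).obj T.obj := rfl

@[simp] theorem compAlong_map_left (Γ : GaloisStructure C X) {E B : C} (p : E ⟶ B)
    (hp : Γ.fib p) {T₁ T₂ : Γ.SliceFib E} (u : T₁ ⟶ T₂) :
    CommaMorphism.left ((Γ.compAlong p hp).map u).hom = CommaMorphism.left u.hom := rfl

@[simp] theorem restrictI_obj_obj (Γ : GaloisStructure C X) {B : C} (T : Γ.SliceFib B) :
    ((Γ.restrictI B).obj T).obj = (Over.post Γ.I).obj T.obj := rfl

@[simp] theorem restrictI_map_left (Γ : GaloisStructure C X) {B : C}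
    {T₁ T₂ : Γ.SliceFib B} (u : T₁ ⟶ T₂) :
    CommaMorphism.left ((Γ.restrictI B).map u).hom = Γ.I.map (CommaMorphism.left u.hom) := rfl

/-- Fibrations are stable under any chosen pullback square. -/
theorem fib_isPullback_stable (Γ : GaloisStructure C X) {P A B Z : C}
    {f : A ⟶ B} {g : Z ⟶ B} {q : P ⟶ A} {r : P ⟶ Z}
    (hf : Γ.fib f) (sq : IsPullback q r f g) : Γ.fib r := by
  obtain ⟨P', p₁, p₂, hP', hp₂⟩ := Γ.fib_pullback f g hf
  have hiso : (sq.isoIsPullback _ _ hP').hom ≫ p₂ = r :=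
    IsPullback.isoIsPullback_hom_snd _ _ sq hP'
  rw [← hiso]
  exact Γ.fib_comp _ _ (Γ.fib_of_iso _ inferInstance) hp₂

/-- For an admissible Galois structure, `I` preserves pullbacks of trivial coverings. -/
theorem isPullback_I_map (Γ : GaloisStructure C X) (hadm : Γ.Admissible)
    {P A B Z : C} {f : A ⟶ B} {g : Z ⟶ B} {q : P ⟶ A} {r : P ⟶ Z}
    (hf : Γ.TrivialCovering f) (sq : IsPullback q r f g) :
    IsPullback (Γ.I.map q) (Γ.I.map r) (Γ.I.map f) (Γ.I.map g) := by
  have hfibr : Γ.fib r := Γ.fib_isPullback_stable hf.1 sq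
  obtain ⟨Y, y₁, y₂, hY, hy₂⟩ := Γ.fibX_pullback (Γ.I.map f) (Γ.I.map g) (Γ.I_fib f hf.1)
  have hkw : Γ.I.map q ≫ Γ.I.map f = Γ.I.map r ≫ Γ.I.map g := by
    rw [← Γ.I.map_comp, ← Γ.I.map_comp, sq.w]
  obtain ⟨HZ, adjZ, hfull, hfaith⟩ := hadm Z
  haveI := hfull
  haveI := hfaith
  let w : Γ.SliceFib Z := ⟨Over.mk r, hfibr⟩
  let x : Γ.SliceFibX (Γ.I.obj Z) := ⟨Over.mk y₂, hy₂⟩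
  let k : Γ.I.obj P ⟶ Y := hY.lift (Γ.I.map q) (Γ.I.map r) hkw
  have hk₁ : k ≫ y₁ = Γ.I.map q := hY.lift_fst _ _ _
  have hk₂ : k ≫ y₂ = Γ.I.map r := hY.lift_snd _ _ _
  let φ : (Γ.restrictI Z).obj w ⟶ x := ObjectProperty.homMk (Over.homMk k hk₂)
  have hbij : ∀ T : Γ.SliceFib Z,
      Function.Bijective (fun h : T ⟶ w => (Γ.restrictI Z).map h ≫ φ) := by
    intro T
    constructor
    · intro h₁ h₂ hh
      have hl : Γ.I.map (CommaMorphism.left h₁.hom) ≫ k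
          = Γ.I.map (CommaMorphism.left h₂.hom) ≫ k := by
        have := congrArg (fun u => CommaMorphism.left u.hom) hh
        exact this
      have hIq : Γ.I.map (CommaMorphism.left h₁.hom ≫ q) = Γ.I.map (CommaMorphism.left h₂.hom ≫ q) := by
        rw [Γ.I.map_comp, Γ.I.map_comp, ← hk₁, ← Category.assoc, ← Category.assoc, hl]
      have hr₁ : CommaMorphism.left h₁.hom ≫ r = T.obj.hom := by exact Over.w h₁.hom
      have hr₂ : CommaMorphism.left h₂.hom ≫ r = T.obj.hom := by exact Over.w h₂.hom
      have ha : CommaMorphism.left h₁.hom ≫ q = CommaMorphism.left h₂.hom ≫ q := by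
        apply hf.2.hom_ext
        · have n₁ : (CommaMorphism.left h₁.hom ≫ q) ≫ Γ.adj.unit.app A
              = Γ.adj.unit.app T.obj.left ≫ (Γ.I ⋙ Γ.H).map (CommaMorphism.left h₁.hom ≫ q) := by
            simpa using Γ.adj.unit.naturality (CommaMorphism.left h₁.hom ≫ q)
          have n₂ : (CommaMorphism.left h₂.hom ≫ q) ≫ Γ.adj.unit.app A
              = Γ.adj.unit.app T.obj.left ≫ (Γ.I ⋙ Γ.H).map (CommaMorphism.left h₂.hom ≫ q) := by
            simpa using Γ.adj.unit.naturality (CommaMorphism.left h₂.hom ≫ q)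
          rw [n₁, n₂]
          simp only [Functor.comp_map]
          rw [hIq]
        · rw [Category.assoc, Category.assoc, sq.w, ← Category.assoc, ← Category.assoc,
            hr₁, hr₂]
      exact sliceHomExt (sq.hom_ext ha (hr₁.trans hr₂.symm))
    · intro ψ
      have hu : CommaMorphism.left ψ.hom ≫ y₂ = Γ.I.map T.obj.hom := by exact Over.w ψ.hom
      have hα : (CommaMorphism.left ψ.hom ≫ y₁) ≫ Γ.I.map f = Γ.I.map (T.obj.hom ≫ g) := by
        erw [Category.assoc, hY.w, ← Category.assoc, hu, ← Γ.I.map_comp]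
      have hβ : (Γ.adj.unit.app T.obj.left ≫ Γ.H.map (CommaMorphism.left ψ.hom ≫ y₁))
          ≫ (Γ.I ⋙ Γ.H).map f = (T.obj.hom ≫ g) ≫ Γ.adj.unit.app B := by
        erw [Category.assoc, Functor.comp_map, ← Γ.H.map_comp, hα]
        simpa using (Γ.adj.unit.naturality (T.obj.hom ≫ g)).symm
      have ha₁ : hf.2.lift _ _ hβ ≫ Γ.adj.unit.app A
          = Γ.adj.unit.app T.obj.left ≫ Γ.H.map (CommaMorphism.left ψ.hom ≫ y₁) :=
        hf.2.lift_fst _ _ _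
      have ha₂ : hf.2.lift _ _ hβ ≫ f = T.obj.hom ≫ g := hf.2.lift_snd _ _ _
      have hh₁ : sq.lift _ T.obj.hom ha₂ ≫ q = hf.2.lift _ _ hβ := sq.lift_fst _ _ _
      have hh₂ : sq.lift _ T.obj.hom ha₂ ≫ r = T.obj.hom := sq.lift_snd _ _ _
      have hIa : Γ.I.map (hf.2.lift _ _ hβ) = CommaMorphism.left ψ.hom ≫ y₁ := by
        apply (Γ.adj.homEquiv _ _).injective
        erw [Adjunction.homEquiv_unit, Adjunction.homEquiv_unit]
        have hnat : hf.2.lift _ _ hβ ≫ Γ.adj.unit.app A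
            = Γ.adj.unit.app T.obj.left ≫ (Γ.I ⋙ Γ.H).map (hf.2.lift _ _ hβ) := by
          simpa using Γ.adj.unit.naturality (hf.2.lift _ _ hβ)
        exact hnat.symm.trans ha₁
      refine ⟨ObjectProperty.homMk (Over.homMk (sq.lift _ T.obj.hom ha₂) hh₂), ?_⟩
      apply sliceHomExt
      show Γ.I.map (sq.lift _ T.obj.hom ha₂) ≫ k = CommaMorphism.left ψ.hom
      apply hY.hom_ext
      · erw [Category.assoc, hk₁, ← Γ.I.map_comp, hh₁, hIa]; rfl
      · erw [Category.assoc, hk₂, ← Γ.I.map_comp, hh₂, hu]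
  haveI : IsIso φ := isIso_of_postcomp_bijective adjZ φ hbij
  haveI hki : IsIso k :=
    (inferInstance : IsIso ((ObjectProperty.ι _ ⋙ Over.forget (Γ.I.obj Z)).map φ))
  exact hY.of_iso (asIso k).symm (Iso.refl _) (Iso.refl _) (Iso.refl _)
    (by rw [← cancel_epi k]; simp [hk₁]) (by rw [← cancel_epi k]; simp [hk₂])
    (by simp) (by simp)

/-- For an admissible Galois structure, trivial coverings are stable under pullback. -/
theorem trivialCovering_isPullback_stable (Γ : GaloisStructure C X) (hadm : Γ.Admissible)
    {P A B Z : C} {f : A ⟶ B} {g : Z ⟶ B} {q : P ⟶ A} {r : P ⟶ Z}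
    (hf : Γ.TrivialCovering f) (sq : IsPullback q r f g) : Γ.TrivialCovering r := by
  refine ⟨Γ.fib_isPullback_stable hf.1 sq, ?_⟩
  have hI := Γ.isPullback_I_map hadm hf sq
  haveI : PreservesLimitsOfSize.{0, 0} Γ.H := Γ.adj.rightAdjoint_preservesLimits
  have hH : IsPullback (Γ.H.map (Γ.I.map q)) (Γ.H.map (Γ.I.map r)) (Γ.H.map (Γ.I.map f))
      (Γ.H.map (Γ.I.map g)) := hI.map Γ.H
  have rect : IsPullback (q ≫ Γ.adj.unit.app A) r ((Γ.I ⋙ Γ.H).map f)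
      (g ≫ Γ.adj.unit.app B) := sq.paste_horiz hf.2
  have nq : q ≫ Γ.adj.unit.app A = Γ.adj.unit.app P ≫ (Γ.I ⋙ Γ.H).map q := by
    simpa using Γ.adj.unit.naturality q
  have ng : g ≫ Γ.adj.unit.app B = Γ.adj.unit.app Z ≫ (Γ.I ⋙ Γ.H).map g := by
    simpa using Γ.adj.unit.naturality g
  rw [nq, ng] at rect
  exact IsPullback.of_right rect (by simpa using (Γ.adj.unit.naturality r).symm) hH

/-- Monadic extensions are stable under precomposition with isomorphisms. -/
theorem monadicExtension_comp_iso (Γ : GaloisStructure C X) {P P' Z : C} (e : P ⟶ P')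
    [IsIso e] {r' : P' ⟶ Z} (h : Γ.MonadicExtension r') : Γ.MonadicExtension (e ≫ r') := by
  obtain ⟨hr', pstar', ⟨adj'⟩, ⟨hmon'⟩⟩ := h
  have hfe : Γ.fib e := Γ.fib_of_iso e inferInstance
  have hr : Γ.fib (e ≫ r') := Γ.fib_comp _ _ hfe hr'
  haveI : (Γ.compAlong e hfe).Faithful := by
    constructor
    intro T₁ T₂ u v huv
    exact sliceHomExt (by simpa using congrArg (fun u => CommaMorphism.left u.hom) huv)
  haveI : (Γ.compAlong e hfe).Full := by
    constructor
    intro T₁ T₂ v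
    refine ⟨ObjectProperty.homMk (Over.homMk
      ((v.hom : (Over.map e).obj T₁.obj ⟶ (Over.map e).obj T₂.obj).left) ?_), ?_⟩
    · erw [← cancel_mono e, Category.assoc]
      simpa using Over.w (v.hom : (Over.map e).obj T₁.obj ⟶ (Over.map e).obj T₂.obj)
    · exact sliceHomExt (by simp)
  haveI : (Γ.compAlong e hfe).EssSurj := by
    constructor
    intro S
    exact ⟨⟨Over.mk (S.obj.hom ≫ inv e),
        Γ.fib_comp _ _ S.property (Γ.fib_of_iso _ inferInstance)⟩,
      ⟨sliceIsoMk (Over.isoMk (Iso.refl _) (by simp))⟩⟩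
  haveI : (Γ.compAlong e hfe).IsEquivalence := {}
  let Eq := (Γ.compAlong e hfe).asEquivalence
  have natiso : Γ.compAlong e hfe ⋙ Γ.compAlong r' hr' ≅ Γ.compAlong (e ≫ r') hr :=
    NatIso.ofComponents
      (fun T => sliceIsoMk (Over.isoMk (Iso.refl _) (by simp)))
      (fun {T₁ T₂} u => sliceHomExt (by exact (Category.comp_id _).trans (Category.id_comp _).symm))
  have adjfinal : Γ.compAlong (e ≫ r') hr ⊣ pstar' ⋙ Eq.inverse :=
    (Eq.toAdjunction.comp adj').ofNatIsoLeft natiso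
  haveI := hmon'
  have hmon2 : MonadicRightAdjoint (pstar' ⋙ Eq.inverse) :=
    monadicRightAdjointCompEquivalence pstar' Eq.symm
  exact ⟨hr, pstar' ⋙ Eq.inverse, ⟨adjfinal⟩, ⟨hmon2⟩⟩


/-- Lemma 2.5.
If `Γ` is an admissible Galois structure in which monadic extensions are pullback-stable,
then normal extensions and coverings are pullback-stable: the pullback of a normal
extension (respectively, of a covering) along any morphism of `C` exists and is again a
normal extension (respectively, a covering). -/
theorem normalExtension_covering_pullback_stable
    (Γ : GaloisStructure C X) (hadm : Γ.Admissible) (hmon : Γ.MonStable) :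
    (∀ {E B Z : C} (p : E ⟶ B) (g : Z ⟶ B), Γ.NormalExtension p →
      ∃ (P : C) (q : P ⟶ E) (r : P ⟶ Z), IsPullback q r p g) ∧
    (∀ {P E B Z : C} (p : E ⟶ B) (g : Z ⟶ B) (q : P ⟶ E) (r : P ⟶ Z),
      IsPullback q r p g → Γ.NormalExtension p → Γ.NormalExtension r) ∧
    (∀ {A B Z : C} (f : A ⟶ B) (g : Z ⟶ B), Γ.Covering f →
      ∃ (P : C) (q : P ⟶ A) (r : P ⟶ Z), IsPullback q r f g) ∧
    (∀ {P A B Z : C} (f : A ⟶ B) (g : Z ⟶ B) (q : P ⟶ A) (r : P ⟶ Z),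
      IsPullback q r f g → Γ.Covering f → Γ.Covering r) := by
  refine ⟨?_, ?_, ?_, ?_⟩
  · -- existence of pullbacks of normal extensions
    intro E B Z p g hp
    obtain ⟨hpf, -⟩ := id hp.1
    obtain ⟨P, q, r, hpb, -⟩ := Γ.fib_pullback p g hpf
    exact ⟨P, q, r, hpb⟩
  · -- stability of normal extensions
    intro P E B Z p g q r sq hp
    obtain ⟨hpmon, R, d, c, hkp, hd, hc⟩ := hp
    obtain ⟨hpf, -⟩ := id hpmon
    have hrf : Γ.fib r := Γ.fib_isPullback_stable hpf sq
    -- the monadic part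
    obtain ⟨P', q', r', sq', hmon'⟩ := hmon p g hpmon
    have hre : (sq.isoIsPullback _ _ sq').hom ≫ r' = r :=
      IsPullback.isoIsPullback_hom_snd _ _ sq sq'
    have hrmon : Γ.MonadicExtension r := by
      rw [← hre]
      exact Γ.monadicExtension_comp_iso _ hmon'
    -- the kernel pair part
    obtain ⟨Rr, dr, cr, hRr, -⟩ := Γ.fib_pullback r r hrf
    have hm : (dr ≫ q) ≫ p = (cr ≫ q) ≫ p := by
      rw [Category.assoc, Category.assoc, sq.w, ← Category.assoc, ← Category.assoc, hRr.w]
    have hmd : hkp.lift (dr ≫ q) (cr ≫ q) hm ≫ d = dr ≫ q := hkp.lift_fst _ _ _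
    have hmc : hkp.lift (dr ≫ q) (cr ≫ q) hm ≫ c = cr ≫ q := hkp.lift_snd _ _ _
    have rect1 : IsPullback (cr ≫ q) dr p (r ≫ g) := hRr.flip.paste_horiz sq
    rw [← hmc, ← sq.w] at rect1
    have sqd : IsPullback (hkp.lift (dr ≫ q) (cr ≫ q) hm) dr d q :=
      IsPullback.of_right rect1 hmd hkp.flip
    have rect2 : IsPullback (dr ≫ q) cr p (r ≫ g) := hRr.paste_horiz sq
    rw [← hmd, ← sq.w] at rect2
    have sqc : IsPullback (hkp.lift (dr ≫ q) (cr ≫ q) hm) cr c q :=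
      IsPullback.of_right rect2 hmc hkp
    exact ⟨hrmon, Rr, dr, cr, hRr,
      Γ.trivialCovering_isPullback_stable hadm hd sqd,
      Γ.trivialCovering_isPullback_stable hadm hc sqc⟩
  · -- existence of pullbacks of coverings
    intro A B Z f g hf
    obtain ⟨P, q, r, hpb, -⟩ := Γ.fib_pullback f g hf.1
    exact ⟨P, q, r, hpb⟩
  · -- stability of coverings
    intro P₂ A B Z f g q₂ r₂ sq hf
    obtain ⟨hff, E, p, hpmon, P₀, q₀, r₀, sq₀, hr₀⟩ := hf
    refine ⟨Γ.fib_isPullback_stable hff sq, ?_⟩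
    obtain ⟨E', q', p', sqE, hp'mon⟩ := hmon p g hpmon
    obtain ⟨W, w₁, w₂, hW, -⟩ := Γ.fib_pullback r₀ q' hr₀.1
    have hn : (w₁ ≫ q₀) ≫ f = (w₂ ≫ p') ≫ g := by
      rw [Category.assoc, sq₀.w, ← Category.assoc, hW.w, Category.assoc, sqE.w,
        ← Category.assoc]
    have hn₂ : sq.lift (w₁ ≫ q₀) (w₂ ≫ p') hn ≫ r₂ = w₂ ≫ p' := sq.lift_snd _ _ _
    have rect : IsPullback (w₁ ≫ q₀) w₂ f (q' ≫ p) := hW.paste_horiz sq₀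
    rw [← sq.lift_fst (w₁ ≫ q₀) (w₂ ≫ p') hn, sqE.w] at rect
    have sqW : IsPullback (sq.lift (w₁ ≫ q₀) (w₂ ≫ p') hn) w₂ r₂ p' :=
      IsPullback.of_right rect hn₂ sq
    exact ⟨E', p', hp'mon, W, sq.lift (w₁ ≫ q₀) (w₂ ≫ p') hn, w₂, sqW,
      Γ.trivialCovering_isPullback_stable hadm hr₀ hW⟩

end GaloisStructure
end GaloisPaper
end

section
/- If Γ is an admissible Galois structure, then the functor I : C → X preserves pullbacks along trivial coverings; in particular, the pullback of a trivial covering along any morphism of C is again a trivial covering. -/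
open CategoryTheory CategoryTheory.Limits

universe v₁ v₂ u₁ u₂

namespace GaloisPaper
namespace GaloisStructure

variable {C : Type u₁} [Category.{v₁} C] {X : Type u₂} [Category.{v₂} X]

/-- Lemma 2.4, [JK, Proposition 2.4].
If `Γ` is an admissible Galois structure, then the reflection `I : C ⥤ X` preserves
pullbacks along trivial coverings; in particular, the pullback of a trivial covering
along any morphism of `C` is again a trivial covering. -/
theorem I_preserves_pullbacks_along_trivialCoverings
    (Γ : GaloisStructure C X) (hadm : Γ.Admissible)
    {P A B Z : C} (f : A ⟶ B) (g : Z ⟶ B) (q : P ⟶ A) (r : P ⟶ Z)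
    (hpb : IsPullback q r f g) (hf : Γ.TrivialCovering f) :
    IsPullback (Γ.I.map q) (Γ.I.map r) (Γ.I.map f) (Γ.I.map g) ∧
    Γ.TrivialCovering r := by
  obtain ⟨hffib, hfsq0⟩ := hf
  -- unit naturality in convenient form
  have nat : ∀ {U V : C} (k : U ⟶ V),
      k ≫ Γ.adj.unit.app V = Γ.adj.unit.app U ≫ Γ.H.map (Γ.I.map k) := by
    intro U V k
    simpa using Γ.adj.unit.naturality k
  -- `r` is a fibration
  obtain ⟨P', p₁', p₂', hpb', hfib'⟩ := Γ.fib_pullback f g hffib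
  have hr : Γ.fib r := by
    have hre : r = (hpb.isoIsPullback A Z hpb').hom ≫ p₂' :=
      (hpb.isoIsPullback_hom_snd A Z hpb').symm
    rw [hre]
    exact Γ.fib_comp _ _ (Γ.fib_of_iso _ inferInstance) hfib'
  -- pullback of `I f` along `I g` in `X`
  obtain ⟨Q, p₁, p₂, hQ, hp₂⟩ := Γ.fibX_pullback (Γ.I.map f) (Γ.I.map g) (Γ.I_fib f hffib)
  haveI : PreservesLimitsOfSize.{0, 0} Γ.H := Γ.adj.rightAdjoint_preservesLimits
  have s3 : IsPullback (Γ.H.map p₁) (Γ.H.map p₂) (Γ.H.map (Γ.I.map f)) (Γ.H.map (Γ.I.map g)) :=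
    hQ.map Γ.H
  have hfsq : IsPullback (Γ.adj.unit.app A) f (Γ.H.map (Γ.I.map f)) (Γ.adj.unit.app B) := hfsq0
  have big : IsPullback (q ≫ Γ.adj.unit.app A) r (Γ.H.map (Γ.I.map f))
      (g ≫ Γ.adj.unit.app B) := hpb.paste_horiz hfsq
  have hw : (q ≫ Γ.adj.unit.app A) ≫ Γ.H.map (Γ.I.map f)
      = (r ≫ Γ.adj.unit.app Z) ≫ Γ.H.map (Γ.I.map g) := by
    rw [Category.assoc, ← nat f, Category.assoc, ← nat g, ← Category.assoc, hpb.w,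
      Category.assoc]
  -- the comparison map into `H Q`
  set φ : P ⟶ Γ.H.obj Q := s3.lift (q ≫ Γ.adj.unit.app A) (r ≫ Γ.adj.unit.app Z) hw with hφ
  have hφ₁ : φ ≫ Γ.H.map p₁ = q ≫ Γ.adj.unit.app A := s3.lift_fst _ _ _
  have hφ₂ : φ ≫ Γ.H.map p₂ = r ≫ Γ.adj.unit.app Z := s3.lift_snd _ _ _
  have big' : IsPullback (φ ≫ Γ.H.map p₁) r (Γ.H.map (Γ.I.map f))
      (Γ.adj.unit.app Z ≫ Γ.H.map (Γ.I.map g)) := by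
    rw [hφ₁, ← nat g]; exact big
  have s4 : IsPullback φ r (Γ.H.map p₂) (Γ.adj.unit.app Z) := big'.of_right hφ₂ s3
  -- the transpose of φ
  set φb : Γ.I.obj P ⟶ Q := (Γ.adj.homEquiv P Q).symm φ with hφb
  have tphi : Γ.adj.unit.app P ≫ Γ.H.map φb = φ := by
    have h := (Γ.adj.homEquiv P Q).apply_symm_apply φ
    rw [Adjunction.homEquiv_unit] at h
    rw [hφb]
    exact h
  have key : ∀ {U : C} {V : X} (s t : Γ.I.obj U ⟶ V),
      Γ.adj.unit.app U ≫ Γ.H.map s = Γ.adj.unit.app U ≫ Γ.H.map t → s = t := by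
    intro U V s t h
    apply (Γ.adj.homEquiv U V).injective
    simpa [Adjunction.homEquiv_unit] using h
  have hφp₁ : φb ≫ p₁ = Γ.I.map q := by
    apply key
    rw [Γ.H.map_comp, ← Category.assoc, tphi, hφ₁, nat q]
  have hφp₂ : φb ≫ p₂ = Γ.I.map r := by
    apply key
    rw [Γ.H.map_comp, ← Category.assoc, tphi, hφ₂, nat r]
  -- admissibility at Z
  obtain ⟨HZ, adj2, hfull, hfaith⟩ := hadm Z
  haveI := hfull
  haveI := hfaith
  -- objects and the comparison morphism in the sliced categories
  let xP : Γ.SliceFib Z := ⟨Over.mk r, hr⟩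
  let xQ : Γ.SliceFibX (Γ.I.obj Z) := ⟨Over.mk p₂, hp₂⟩
  let m : (Γ.restrictI Z).obj xP ⟶ xQ := ⟨Over.homMk φb (by exact hφp₂)⟩
  -- universal property of (xP, m)
  have upφ : ∀ (a : Γ.SliceFib Z) (t : (Γ.restrictI Z).obj a ⟶ xQ),
      ∃! h : a ⟶ xP, (Γ.restrictI Z).map h ≫ m = t := by
    intro a t
    set t' : (Over.post Γ.I).obj a.obj ⟶ Over.mk p₂ := t.hom with ht'def
    have tw : t'.left ≫ p₂ = Γ.I.map a.obj.hom := by exact Over.w t'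
    have ht' : (Γ.adj.unit.app a.obj.left ≫ Γ.H.map t'.left) ≫ Γ.H.map p₂
        = a.obj.hom ≫ Γ.adj.unit.app Z := by
      rw [Category.assoc, nat a.obj.hom, ← tw]
      exact congrArg (Γ.adj.unit.app a.obj.left ≫ ·) (Γ.H.map_comp _ _).symm
    set h₀ : a.obj.left ⟶ P := s4.lift _ _ ht' with hh₀
    have hl1 : h₀ ≫ φ = Γ.adj.unit.app a.obj.left ≫ Γ.H.map t'.left := s4.lift_fst _ _ _
    have hl2 : h₀ ≫ r = a.obj.hom := s4.lift_snd _ _ _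
    have hl2' : h₀ ≫ (Over.mk r).hom = a.obj.hom := hl2
    refine ⟨⟨Over.homMk h₀ hl2'⟩, ?_, ?_⟩
    · apply ObjectProperty.hom_ext
      show ((Over.post Γ.I).map (Over.homMk h₀ hl2') ≫ m.hom : _ ⟶ Over.mk p₂) = t'
      apply Over.OverMorphism.ext
      show Γ.I.map h₀ ≫ φb = t'.left
      apply key
      rw [Γ.H.map_comp, ← Category.assoc, ← nat h₀, Category.assoc, tphi, hl1]
    · intro h' hh'
      have hh'l : Γ.I.map (h'.hom.left) ≫ φb = t'.left :=
        congrArg (fun k => k.hom.left) hh'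
      have e0 : h'.hom.left ≫ Γ.adj.unit.app P
          = Γ.adj.unit.app a.obj.left ≫ Γ.H.map (Γ.I.map (h'.hom.left)) :=
        nat _
      have e1 : h'.hom.left ≫ φ
          = Γ.adj.unit.app a.obj.left ≫ Γ.H.map t'.left := by
        rw [← tphi, ← Category.assoc, e0, Category.assoc, ← Γ.H.map_comp, hh'l]
      have e2 : h'.hom.left ≫ r = a.obj.hom := by
        exact Over.w h'.hom
      apply ObjectProperty.hom_ext
      apply Over.OverMorphism.ext
      refine s4.hom_ext ?_ ?_
      · show h'.hom.left ≫ φ = h₀ ≫ φ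
        rw [hl1, e1]
      · show h'.hom.left ≫ r = h₀ ≫ r
        rw [hl2, e2]
  -- the adjoint transpose of m is an isomorphism
  set ψ : xP ⟶ HZ.obj xQ := (adj2.homEquiv xP xQ) m with hψdef
  have hψ : (Γ.restrictI Z).map ψ ≫ adj2.counit.app xQ = m := by
    have := (adj2.homEquiv xP xQ).symm_apply_apply m
    rwa [Adjunction.homEquiv_counit] at this
  obtain ⟨χ, hχ, -⟩ := upφ (HZ.obj xQ) (adj2.counit.app xQ)
  have h1 : ψ ≫ χ = 𝟙 xP := by
    obtain ⟨h₀, hh₀, huniq⟩ := upφ xP m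
    have e1 := huniq (ψ ≫ χ) (by
      show (Γ.restrictI Z).map (ψ ≫ χ) ≫ m = m
      rw [Functor.map_comp, Category.assoc, hχ, hψ])
    have e2 := huniq (𝟙 xP) (by
      show (Γ.restrictI Z).map (𝟙 xP) ≫ m = m
      simp)
    rw [e1, e2]
  have h2 : χ ≫ ψ = 𝟙 (HZ.obj xQ) := by
    apply (adj2.homEquiv _ _).symm.injective
    rw [Adjunction.homEquiv_counit, Adjunction.homEquiv_counit, Functor.map_comp,
      Category.assoc, hψ, hχ]
    simp
  haveI : IsIso ψ := ⟨χ, h1, h2⟩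
  have hmiso : IsIso m := by
    rw [← hψ]
    infer_instance
  have hφbiso : IsIso φb := by
    haveI := hmiso
    haveI := (ObjectProperty.ι _ ⋙ Over.forget (Γ.I.obj Z)).map_isIso m
    exact this
  haveI := hφbiso
  constructor
  · refine hQ.of_iso ((asIso φb).symm) (Iso.refl _) (Iso.refl _) (Iso.refl _) ?_ ?_
      (by simp) (by simp)
    · simp only [Iso.refl_hom, Category.comp_id, Iso.symm_hom, asIso_inv]
      rw [IsIso.eq_inv_comp]
      exact hφp₁
    · simp only [Iso.refl_hom, Category.comp_id, Iso.symm_hom, asIso_inv]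
      rw [IsIso.eq_inv_comp]
      exact hφp₂
  · refine ⟨hr, ?_⟩
    refine s4.of_iso (Iso.refl _) ((asIso (Γ.H.map φb)).symm) (Iso.refl _) (Iso.refl _)
      ?_ (by simp) ?_ (by simp)
    · simp only [Iso.refl_hom, Category.id_comp, Iso.symm_hom, asIso_inv]
      rw [IsIso.comp_inv_eq]
      exact tphi.symm
    · simp only [Iso.refl_hom, Category.comp_id, Iso.symm_hom, asIso_inv]
      rw [IsIso.eq_inv_comp]
      show Γ.H.map φb ≫ Γ.H.map p₂ = Γ.H.map (Γ.I.map r)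
      rw [← Γ.H.map_comp, hφp₂]

end GaloisStructure
end GaloisPaper
end

section
/- The sequence of pointed sets 0 → π₁(E, x) → π₁(B, y) → (F, x) → π₀(E, [x]) → 0 is exact, where the first map is p_*, the second is the monodromy map δ, the third sends a point of the fibre F to its path component in E (with basepoint the component of x), and π₀(E, [x]) denotes the pointed set of path components of E. Explicitly: p_* is injective; δ⁻¹{x} equals the image of p_*; a point z ∈ F lies in the image of δ if and only if z ∈ E_x; and every path component of E contains a point of F. -/
open Topology CategoryTheory

attribute [local instance] Path.Homotopic.setoid

namespace GaloisPaper

/-- The element of the fundamental group determined by a loop. -/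
noncomputable def fromLoop {Y : Type*} [TopologicalSpace Y] {y : Y} (γ : Path y y) :
    FundamentalGroup Y y :=
  FundamentalGroup.fromPath (⟦γ⟧ : Path.Homotopic.Quotient y y)

open Set unitInterval

/-! ### Auxiliary lemmas -/

lemma aux_isPreconnected_Icc (a b : I) : _root_.IsPreconnected (Set.Icc a b) := by
  have h : (Subtype.val '' Set.Icc a b : Set ℝ) = Set.Icc (a : ℝ) (b : ℝ) := by
    ext r
    constructor
    · rintro ⟨s, hs, rfl⟩
      exact ⟨Subtype.coe_le_coe.2 hs.1, Subtype.coe_le_coe.2 hs.2⟩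
    · rintro ⟨h1, h2⟩
      exact ⟨⟨r, ⟨a.2.1.trans h1, h2.trans b.2.2⟩⟩, ⟨h1, h2⟩, rfl⟩
  have h2 : _root_.IsPreconnected (Subtype.val '' Set.Icc a b : Set ℝ) := by
    rw [h]; exact isPreconnected_Icc
  exact (IsInducing.subtypeVal.isPreconnected_image).mp h2

lemma aux_continuousOn_union_closed {X Y : Type*} [TopologicalSpace X] [TopologicalSpace Y]
    {g : X → Y} {s t : Set X} (hs : IsClosed s) (ht : IsClosed t)
    (hgs : ContinuousOn g s) (hgt : ContinuousOn g t) : ContinuousOn g (s ∪ t) := by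
  have h := (locallyFinite_of_finite (fun b : Bool => cond b s t)).continuousOn_iUnion
    (g := g) (fun b => by cases b <;> simpa) (fun b => by cases b <;> simpa)
  rwa [Set.union_eq_iUnion]

/-- **Path lifting** along a covering map. -/
theorem aux_exists_path_lift {E X : Type*} [TopologicalSpace E] [TopologicalSpace X]
    {f : E → X} (hf : IsCoveringMap f) (γ : I → X) (hγ : Continuous γ)
    (x₀ : E) (hx : f x₀ = γ 0) :
    ∃ g : I → E, Continuous g ∧ g 0 = x₀ ∧ ∀ u, f (g u) = γ u := by
  obtain ⟨Γ, hΓ, hΓ0⟩ := hf.exists_path_lifts ⟨γ, hγ⟩ x₀ hx.symm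
  exact ⟨Γ, Γ.continuous, hΓ0, fun u => congrFun hΓ u⟩

/-- Uniqueness of lifts on the unit interval. -/
theorem aux_lift_unique {E X : Type*} [TopologicalSpace E] [TopologicalSpace X]
    {f : E → X} (hf : IsCoveringMap f) {g₁ g₂ : I → E} (h₁ : Continuous g₁)
    (h₂ : Continuous g₂) (he : ∀ u, f (g₁ u) = f (g₂ u)) (h0 : g₁ 0 = g₂ 0) :
    ∀ u, g₁ u = g₂ u :=
  fun u => congrFun (hf.eq_of_comp_eq h₁ h₂ (funext he) 0 h0) u

/-- Joint continuity of a family of path lifts. -/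
theorem aux_continuous_lifts {E X : Type*} [TopologicalSpace E] [TopologicalSpace X]
    {f : E → X} (hf : IsCoveringMap f) {H : I × I → X} (hH : Continuous H)
    (x₀ : E) (L : I → I → E) (hLc : ∀ s, Continuous (L s))
    (hL0 : ∀ s, L s 0 = x₀) (hLf : ∀ s u, f (L s u) = H (s, u)) :
    Continuous (fun q : I × I => L q.1 q.2) := by
  have hc := hf.isLocalHomeomorph.continuous_lift hf.isSeparatedMap
    ⟨fun q : I × I => H (q.2, q.1), by fun_prop⟩ (g := fun q => L q.2 q.1)
    (funext fun q => hLf q.2 q.1) (by simp only [hL0]; exact continuous_const)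
    (fun s => hLc s)
  exact hc.comp continuous_swap

/-- **Homotopy (square) lifting** along a covering map. -/
theorem aux_exists_square_lift {E X : Type*} [TopologicalSpace E] [TopologicalSpace X]
    {f : E → X} (hf : IsCoveringMap f) {H : I × I → X} (hH : Continuous H)
    (x₀ : E) (hx : ∀ s, H (s, 0) = f x₀) :
    ∃ G : I × I → E, Continuous G ∧ (∀ s, G (s, 0) = x₀) ∧ ∀ q, f (G q) = H q := by
  have h : ∀ s : I, ∃ g : I → E, Continuous g ∧ g 0 = x₀ ∧ ∀ u, f (g u) = H (s, u) :=
    fun s => aux_exists_path_lift hf _ (hH.comp (Continuous.prodMk_right s)) x₀ (hx s).symm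
  choose L hLc hL0 hLf using h
  exact ⟨fun q => L q.1 q.2, aux_continuous_lifts hf hH x₀ L hLc hL0 hLf,
    fun s => hL0 s, fun q => hLf q.1 q.2⟩

/-- Lifts of homotopic loops (starting at the same point) have the same endpoint. -/
theorem aux_homotopic_lifts_end {E X : Type*} [TopologicalSpace E] [TopologicalSpace X]
    {f : E → X} (hf : IsCoveringMap f) {y : X} {γ₀ γ₁ : Path y y}
    (h : Path.Homotopic γ₀ γ₁) {x₀ : E} (hx : f x₀ = y) {g₀ g₁ : I → E}
    (hg₀c : Continuous g₀) (hg₀0 : g₀ 0 = x₀) (hg₀f : ∀ u, f (g₀ u) = γ₀ u)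
    (hg₁c : Continuous g₁) (hg₁0 : g₁ 0 = x₀) (hg₁f : ∀ u, f (g₁ u) = γ₁ u) :
    g₀ 1 = g₁ 1 := by
  obtain ⟨F⟩ := h
  have hx0 : ∀ s : I, (fun q : I × I => F q) (s, 0) = f x₀ := by
    intro s; rw [hx]; exact F.source s
  obtain ⟨G, hGc, hG0, hGf⟩ := aux_exists_square_lift hf F.continuous x₀ hx0
  have e₀ : ∀ u, G (0, u) = g₀ u := by
    refine aux_lift_unique hf (hGc.comp (Continuous.prodMk_right 0)) hg₀c ?_ (by rw [hG0, hg₀0])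
    intro u
    rw [hGf, hg₀f]
    exact F.apply_zero u
  have e₁ : ∀ u, G (1, u) = g₁ u := by
    refine aux_lift_unique hf (hGc.comp (Continuous.prodMk_right 1)) hg₁c ?_ (by rw [hG0, hg₁0])
    intro u
    rw [hGf, hg₁f]
    exact F.apply_one u
  have hconst : G (0, 1) = G (1, 1) := by
    refine hf.const_of_comp (hGc.comp (continuous_id.prodMk continuous_const)) ?_ 0 1
    intro a a'
    show f (G (a, 1)) = f (G (a', 1))
    rw [hGf, hGf]
    exact (F.target a).trans (F.target a').symm
  rw [← e₀ 1, ← e₁ 1]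
  exact hconst

/-- If the projection of a loop is nullhomotopic, so is the loop itself. -/
theorem aux_homotopic_refl_of_proj {E X : Type*} [TopologicalSpace E] [TopologicalSpace X]
    {f : E → X} (hf : IsCoveringMap f) {x₀ : E} (γ : Path x₀ x₀)
    (h : Path.Homotopic (γ.map hf.continuous) (Path.refl (f x₀))) :
    Path.Homotopic γ (Path.refl x₀) := by
  obtain ⟨F⟩ := h
  have hx0 : ∀ s : I, (fun q : I × I => F q) (s, 0) = f x₀ := fun s => F.source s
  obtain ⟨G, hGc, hG0, hGf⟩ := aux_exists_square_lift hf F.continuous x₀ hx0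
  have e₀ : ∀ u, G (0, u) = γ u := by
    refine aux_lift_unique hf (hGc.comp (Continuous.prodMk_right 0)) γ.continuous ?_
      (by rw [hG0, γ.source])
    intro u
    rw [hGf]
    exact F.apply_zero u
  have e₁ : ∀ u, G (1, u) = x₀ := by
    refine aux_lift_unique hf (hGc.comp (Continuous.prodMk_right 1)) continuous_const ?_ (hG0 1)
    intro u
    rw [hGf]
    exact F.apply_one u
  have etop : ∀ s, G (s, 1) = x₀ := by
    intro s
    have hconst : G (s, 1) = G (1, 1) := by
      refine hf.const_of_comp (hGc.comp (continuous_id.prodMk continuous_const)) ?_ s 1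
      intro a a'
      show f (G (a, 1)) = f (G (a', 1))
      rw [hGf, hGf]
      exact (F.target a).trans (F.target a').symm
    rw [hconst, e₁ 1]
  refine ⟨⟨⟨⟨G, hGc⟩, fun u => e₀ u, fun u => e₁ u⟩, ?_⟩⟩
  intro s u hu
  rcases hu with hu | hu
  · subst hu
    show G (s, 0) = γ 0
    rw [hG0, γ.source]
  · simp only [Set.mem_singleton_iff] at hu
    subst hu
    show G (s, 1) = γ 1
    rw [etop, γ.target]

lemma aux_exists_fromLoop {Y : Type*} [TopologicalSpace Y] {y : Y}
    (g : FundamentalGroup Y y) : ∃ γ : Path y y, fromLoop γ = g := by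
  obtain ⟨γ, hγ⟩ := Quotient.exists_rep
    (show Path.Homotopic.Quotient y y from g)
  exact ⟨γ, hγ⟩

lemma aux_fromLoop_refl_eq_one {Y : Type*} [TopologicalSpace Y] (y : Y) :
    fromLoop (Path.refl y) = (1 : FundamentalGroup Y y) :=
  (FundamentalGroupoid.id_eq_path_refl (⟨y⟩ : FundamentalGroupoid Y)).symm

lemma aux_fromLoop_eq_one_iff {Y : Type*} [TopologicalSpace Y] {y : Y} {γ : Path y y} :
    fromLoop γ = 1 ↔ Path.Homotopic γ (Path.refl y) := by
  constructor
  · intro h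
    have h2 : fromLoop γ = fromLoop (Path.refl y) :=
      h.trans (aux_fromLoop_refl_eq_one y).symm
    have h3 : (⟦γ⟧ : Path.Homotopic.Quotient y y) = ⟦Path.refl y⟧ := h2
    exact Quotient.exact h3
  · intro h
    exact (show fromLoop γ = fromLoop (Path.refl y) from
      (Quotient.sound h : (⟦γ⟧ : Path.Homotopic.Quotient y y) = ⟦Path.refl y⟧)).trans
      (aux_fromLoop_refl_eq_one y)

/-- Section 8: the exact homotopy sequence
`0 → π₁(E, x) → π₁(B, y) → π₀(F, x) → π₀(E, [x]) → 0`.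
In the situation of Statement 17 (with `F = p⁻¹(y)` a discrete fibre, so
`π₀(F, x) = (F, x)`), the sequence of pointed sets
`0 → π₁(E, x) → π₁(B, y) → (F, x) → π₀(E, [x]) → 0` is exact, where the first map is
`p⋆`, the second is the monodromy map `δ`, and the third sends a point of the fibre to
its path component in `E`.  Explicitly: `p⋆` is injective; `δ⁻¹{x}` equals the image of
`p⋆`; a point `z ∈ F` lies in the image of `δ` if and only if `z ∈ E_x`; and every path
component of `E` contains a point of `F`. -/
theorem exact_homotopy_sequence
    {B E U : Type*} [TopologicalSpace B] [TopologicalSpace E] [TopologicalSpace U]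
    [ConnectedSpace B] [LocallyPathConnectedSpace B]
    (p : E → B) (hp : IsCoveringMap p) (hps : Function.Surjective p)
    [LocallyPathConnectedSpace E] (x : E)
    (u : U → B) (hu : IsCoveringMap u)
    [ConnectedSpace U] [LocallyPathConnectedSpace U] [SimplyConnectedSpace U]
    (w : U) (huw : u w = p x)
    (e : U → E) (he : Continuous e) (hpe : ∀ z, p (e z) = u z) (hew : e w = x)
    (pStar : FundamentalGroup E x →* FundamentalGroup B (p x))
    (hpStar : ∀ γ : Path x x, pStar (fromLoop γ) = fromLoop (γ.map hp.continuous))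
    (δ : FundamentalGroup B (p x) → (p ⁻¹' {p x} : Set E))
    (hδ : ∀ {e₁ : E} (γ : Path (p x) (p x)) (γ' : Path x e₁),
      (∀ t, p (γ' t) = γ t) → ((δ (fromLoop γ) : E) = e₁)) :
    Function.Injective pStar ∧
    (∀ g : FundamentalGroup B (p x), δ g = ⟨x, rfl⟩ ↔ g ∈ Set.range pStar) ∧
    (∀ z : (p ⁻¹' {p x} : Set E), z ∈ Set.range δ ↔ (z : E) ∈ pathComponent x) ∧
    (∀ comp : ZerothHomotopy E, ∃ z : (p ⁻¹' {p x} : Set E),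
      Quotient.mk (pathSetoid E) (z : E) = comp) := by
  -- lifting of loops at `p x` starting from a point of the fibre
  have lift : ∀ γ : Path (p x) (p x), ∀ x' : E, p x' = p x →
      ∃ (e₁ : E) (γ' : Path x' e₁), ∀ t, p (γ' t) = γ t := by
    intro γ x' hx'
    obtain ⟨g, hgc, hg0, hgf⟩ :=
      aux_exists_path_lift hp γ γ.continuous x' (hx'.trans γ.source.symm)
    exact ⟨g 1, ⟨⟨g, hgc⟩, hg0, rfl⟩, hgf⟩
  -- injectivity
  have inj : Function.Injective pStar := by
    refine (injective_iff_map_eq_one pStar).2 (fun g hg => ?_)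
    obtain ⟨γ, rfl⟩ := aux_exists_fromLoop g
    rw [hpStar] at hg
    have h := aux_fromLoop_eq_one_iff.1 hg
    have h2 : Path.Homotopic (γ.map hp.continuous) (Path.refl (p x)) := h
    exact aux_fromLoop_eq_one_iff.2 (aux_homotopic_refl_of_proj hp γ h2)
  refine ⟨inj, ?_, ?_, ?_⟩
  · -- exactness at π₁(B)
    intro g
    constructor
    · intro hδg
      obtain ⟨γ, rfl⟩ := aux_exists_fromLoop g
      obtain ⟨e₁, γ', hγ'⟩ := lift γ x rfl
      have he₁ : (δ (fromLoop γ) : E) = e₁ := hδ γ γ' hγ'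
      have he₁x : x = e₁ := by rw [← he₁, hδg]
      set γ'' : Path x x := γ'.cast rfl he₁x with hγ''def
      refine ⟨fromLoop γ'', ?_⟩
      rw [hpStar]
      have hpath : γ''.map hp.continuous = γ := by
        ext t
        exact hγ' t
      rw [hpath]
    · rintro ⟨h, hh⟩
      obtain ⟨γ', rfl⟩ := aux_exists_fromLoop h
      have hend := hδ (γ'.map hp.continuous) γ' (fun t => rfl)
      rw [hpStar] at hh
      rw [← hh]
      exact Subtype.ext hend
  · -- exactness at the fibre
    intro z
    constructor
    · rintro ⟨g, rfl⟩
      obtain ⟨γ, rfl⟩ := aux_exists_fromLoop g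
      obtain ⟨e₁, γ', hγ'⟩ := lift γ x rfl
      have he₁ : (δ (fromLoop γ) : E) = e₁ := hδ γ γ' hγ'
      rw [he₁]
      exact ⟨γ'⟩
    · intro hz
      obtain ⟨γ'⟩ : Joined x (z : E) := hz
      have hz' : p (z : E) = p x := z.2
      set γ : Path (p x) (p x) := (γ'.map hp.continuous).cast rfl hz'.symm with hγdef
      exact ⟨fromLoop γ, Subtype.ext (hδ γ γ' (fun t => rfl))⟩
  · -- surjectivity onto π₀(E)
    intro comp
    obtain ⟨z₀, rfl⟩ := Quotient.exists_rep comp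
    have hB : PathConnectedSpace B := pathConnectedSpace_iff_connectedSpace.mpr inferInstance
    obtain ⟨β⟩ := hB.joined (p z₀) (p x)
    obtain ⟨g, hgc, hg0, hgf⟩ := aux_exists_path_lift hp β β.continuous z₀ β.source.symm
    refine ⟨⟨g 1, ?_⟩, ?_⟩
    · refine Set.mem_preimage.mpr ?_
      have h1 : p (g 1) = p x := by rw [hgf]; exact β.target
      rw [h1]
      exact Set.mem_singleton _
    · refine Quotient.sound ?_
      show Joined (g 1) z₀
      exact ⟨(⟨⟨g, hgc⟩, hg0, rfl⟩ : Path z₀ (g 1)).symm⟩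

end GaloisPaper
end
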